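/- Let N ≥ 3 be an integer. Let p_1, …, p_{N+1}, q_1, …, q_N and p°_1, …, p°_{N+1}, q°_1, …, q°_N be positive real numbers. Define r_N from p_2,…,p_{N+1}, q_2,…,q_N by r_3 = (q_2·p_4 + q_3·p_2)/p_3 and r_m = (r_{m−1}·p_{m+1} + q_m·p_2)/p_m for m = 4,…,N, and define r°_N analogously from the p° and q°. Set X = r_N·p_1/(q_1·p_{N+1}) and X̂ = r°_N·p°_1/(q°_1·p°_{N+1}). Then (Σ_{i=1}^{N} q°_i/(p°_i·p°_{i+1})) / (Σ_{i=1}^{N} q_i/(p_i·p_{i+1})) = ((1 + X̂)/(1 + X)) · (q°_1/q_1) · (p_1·p_2)/(p°_1·p°_2). -/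

import Mathlib

lemma kappa_aux (N : ℕ) (hN : 3 ≤ N) (p q r : ℕ → ℝ)
    (hp : ∀ i, 1 ≤ i → i ≤ N + 1 → 0 < p i)
    (hq : ∀ i, 1 ≤ i → i ≤ N → 0 < q i)
    (hr3 : r 3 = (q 2 * p 4 + q 3 * p 2) / p 3)
    (hr : ∀ m, 4 ≤ m → m ≤ N → r m = (r (m - 1) * p (m + 1) + q m * p 2) / p m) :
    0 < r N ∧ ∑ i ∈ Finset.Icc 2 N, q i / (p i * p (i + 1)) = r N / (p 2 * p (N + 1)) := by
  induction N, hN using Nat.le_induction with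
  | base =>
    have h2 := hp 2 (by omega) (by omega)
    have h3 := hp 3 (by omega) (by omega)
    have h4 := hp 4 (by omega) (by omega)
    have hq2 := hq 2 (by omega) (by omega)
    have hq3 := hq 3 (by omega) (by omega)
    constructor
    · rw [hr3]; positivity
    · have : Finset.Icc 2 3 = {2, 3} := by decide
      rw [this, hr3]
      norm_num
      field_simp
  | succ N hN ih =>
    have ih' := ih (fun i h1 h2 => hp i h1 (by omega)) (fun i h1 h2 => hq i h1 (by omega))
      (fun m h1 h2 => hr m h1 (by omega))
    have h2 := hp 2 (by omega) (by omega)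
    have hN1 := hp (N + 1) (by omega) (by omega)
    have hN2 := hp (N + 2) (by omega) (by omega)
    have hqN := hq (N + 1) (by omega) (by omega)
    have hrec := hr (N + 1) (by omega) (by omega)
    simp only [Nat.add_sub_cancel] at hrec
    constructor
    · rw [hrec]
      have := ih'.1
      positivity
    · rw [Finset.sum_Icc_succ_top (by omega), ih'.2, hrec]
      field_simp

lemma kappa_sum (N : ℕ) (hN : 3 ≤ N) (p q r : ℕ → ℝ)
    (hp : ∀ i, 1 ≤ i → i ≤ N + 1 → 0 < p i)
    (hq : ∀ i, 1 ≤ i → i ≤ N → 0 < q i)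
    (hr3 : r 3 = (q 2 * p 4 + q 3 * p 2) / p 3)
    (hr : ∀ m, 4 ≤ m → m ≤ N → r m = (r (m - 1) * p (m + 1) + q m * p 2) / p m)
    (X : ℝ) (hX : X = r N * p 1 / (q 1 * p (N + 1))) :
    ∑ i ∈ Finset.Icc 1 N, q i / (p i * p (i + 1)) = q 1 / (p 1 * p 2) * (1 + X) := by
  obtain ⟨hrpos, hsum⟩ := kappa_aux N hN p q r hp hq hr3 hr
  have h1 := hp 1 (by omega) (by omega)
  have h2 := hp 2 (by omega) (by omega)
  have hN1 := hp (N + 1) (by omega) (by omega)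
  have hq1 := hq 1 (by omega) (by omega)
  have hsplit : Finset.Icc 1 N = insert 1 (Finset.Icc 2 N) := by
    rw [← Finset.Ioc_insert_left (by omega : 1 ≤ N), ← Finset.Icc_add_one_left_eq_Ioc]; rfl
  rw [hsplit, Finset.sum_insert (by simp), hsum, hX]
  field_simp

/-- The invariant `κ` attached to a puncture is a subtraction-free rational expression in
the `B`- and `X`-coordinates: with positive lambda lengths `p, q` on `S` and `p°, q°` on
`S°`, diagonals `r`, `r°` defined by the recursive Ptolemy relations, and cross ratios
`X = r N · p 1 / (q 1 · p (N+1))`, `X̂ = r° N · p° 1 / (q° 1 · p° (N+1))`, one has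
`(∑ q°ᵢ/(p°ᵢ·p°ᵢ₊₁)) / (∑ qᵢ/(pᵢ·pᵢ₊₁))
  = ((1 + X̂)/(1 + X)) · (q°₁/q₁) · (p₁·p₂)/(p°₁·p°₂)`. -/
theorem kappa_rational (N : ℕ) (hN : 3 ≤ N)
    (p q r po qo ro : ℕ → ℝ)
    (hp : ∀ i, 1 ≤ i → i ≤ N + 1 → 0 < p i)
    (hq : ∀ i, 1 ≤ i → i ≤ N → 0 < q i)
    (hpo : ∀ i, 1 ≤ i → i ≤ N + 1 → 0 < po i)
    (hqo : ∀ i, 1 ≤ i → i ≤ N → 0 < qo i)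
    (hr3 : r 3 = (q 2 * p 4 + q 3 * p 2) / p 3)
    (hr : ∀ m, 4 ≤ m → m ≤ N → r m = (r (m - 1) * p (m + 1) + q m * p 2) / p m)
    (hro3 : ro 3 = (qo 2 * po 4 + qo 3 * po 2) / po 3)
    (hro : ∀ m, 4 ≤ m → m ≤ N → ro m = (ro (m - 1) * po (m + 1) + qo m * po 2) / po m)
    (X Xhat : ℝ)
    (hX : X = r N * p 1 / (q 1 * p (N + 1)))
    (hXhat : Xhat = ro N * po 1 / (qo 1 * po (N + 1))) :
    (∑ i ∈ Finset.Icc 1 N, qo i / (po i * po (i + 1))) /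
      (∑ i ∈ Finset.Icc 1 N, q i / (p i * p (i + 1)))
    = ((1 + Xhat) / (1 + X)) * (qo 1 / q 1) * (p 1 * p 2) / (po 1 * po 2) := by
  have hS := kappa_sum N hN p q r hp hq hr3 hr X hX
  have hSo := kappa_sum N hN po qo ro hpo hqo hro3 hro Xhat hXhat
  have hXpos : 0 < 1 + X := by
    have := (kappa_aux N hN p q r hp hq hr3 hr).1
    have h1 := hp 1 (by omega) (by omega)
    have hN1 := hp (N + 1) (by omega) (by omega)
    have hq1 := hq 1 (by omega) (by omega)
    rw [hX]; positivity
  have hXopos : 0 < 1 + Xhat := by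
    have := (kappa_aux N hN po qo ro hpo hqo hro3 hro).1
    have h1 := hpo 1 (by omega) (by omega)
    have hN1 := hpo (N + 1) (by omega) (by omega)
    have hq1 := hqo 1 (by omega) (by omega)
    rw [hXhat]; positivity
  rw [hS, hSo]
  have h1 := hp 1 (by omega) (by omega)
  have h2 := hp 2 (by omega) (by omega)
  have hq1 := hq 1 (by omega) (by omega)
  have ho1 := hpo 1 (by omega) (by omega)
  have ho2 := hpo 2 (by omega) (by omega)
  have hqo1 := hqo 1 (by omega) (by omega)
  field_simp
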